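/- Let C, K, κ, M, T > 0 and ε > 0. Suppose h : [0, T/ε] → ℝ is continuous, nonnegative, and satisfies h(t) ≤ C ε ∫₀ᵗ ( h(s) + K e^{−κ s} M + C ε ) ds for all t ∈ [0, T/ε]. Then h(t) ≤ C (K M / κ + C T) e^{C T} · ε for all t ∈ [0, T/ε]. -/

import Mathlib

open Set Real intervalIntegral

/-- Integral form of Gronwall's inequality. -/
lemma gronwall_int {a B L : ℝ} (hL : 0 < L) (hB : 0 ≤ B) {h : ℝ → ℝ}
    (hcont : ContinuousOn h (Set.Icc 0 a)) (hnn : ∀ t ∈ Set.Icc (0:ℝ) a, 0 ≤ h t)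
    (hineq : ∀ t ∈ Set.Icc (0:ℝ) a, h t ≤ B + L * ∫ s in (0:ℝ)..t, h s) :
    ∀ t ∈ Set.Icc (0:ℝ) a, h t ≤ B * Real.exp (L * t) := by
  rcases le_or_gt a 0 with ha | ha
  · intro t ht
    have ht0 : t = 0 := le_antisymm (ht.2.trans ha) ht.1
    have := hineq t ht
    simp [ht0, intervalIntegral.integral_same] at this ⊢
    exact this
  set F : ℝ → ℝ := fun t => ∫ s in (0:ℝ)..t, h s with hF
  have hint : ∀ t ∈ Set.Icc (0:ℝ) a, IntervalIntegrable h MeasureTheory.volume 0 t := by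
    intro t ht
    apply ContinuousOn.intervalIntegrable
    apply hcont.mono
    rw [Set.uIcc_of_le ht.1]
    exact Set.Icc_subset_Icc le_rfl ht.2
  have hFnn : ∀ t ∈ Set.Icc (0:ℝ) a, 0 ≤ F t := by
    intro t ht
    apply intervalIntegral.integral_nonneg ht.1
    intro u hu
    exact hnn u ⟨hu.1, hu.2.trans ht.2⟩
  have hFcont : ContinuousOn F (Set.Icc 0 a) := by
    have := intervalIntegral.continuousOn_primitive_interval'
      (hint a ⟨ha.le, le_rfl⟩)
      (by rw [Set.uIcc_of_le ha.le]; exact Set.left_mem_Icc.2 ha.le)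
    rwa [Set.uIcc_of_le ha.le] at this
  have hF' : ∀ t ∈ Set.Ico (0:ℝ) a, HasDerivWithinAt F (h t) (Set.Ici t) t := by
    intro t ht
    have h1 : IntervalIntegrable h MeasureTheory.volume 0 t := hint t ⟨ht.1, ht.2.le⟩
    have hmem : Set.Icc 0 a ∈ nhdsWithin t (Set.Ioi t) :=
      Filter.mem_of_superset (Ioc_mem_nhdsGT_of_mem ⟨le_rfl, ht.2⟩)
        (fun u hu => ⟨ht.1.trans hu.1.le, hu.2⟩)
    have hmeas : StronglyMeasurableAtFilter h (nhdsWithin t (Set.Ioi t)) :=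
      ⟨Set.Icc 0 a, hmem, hcont.aestronglyMeasurable measurableSet_Icc⟩
    have hb : ContinuousWithinAt h (Set.Ioi t) t :=
      (hcont t ⟨ht.1, ht.2.le⟩).mono_of_mem_nhdsWithin hmem
    exact intervalIntegral.integral_hasDerivWithinAt_right h1 hmeas hb
  have key : ∀ t ∈ Set.Icc (0:ℝ) a, ‖F t‖ ≤ gronwallBound 0 L B (t - 0) := by
    apply norm_le_gronwallBound_of_norm_deriv_right_le hFcont hF'
    · simp [hF, intervalIntegral.integral_same]
    · intro x hx
      have hx' : x ∈ Set.Icc (0:ℝ) a := ⟨hx.1, hx.2.le⟩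
      rw [Real.norm_of_nonneg (hnn x hx'), Real.norm_of_nonneg (hFnn x hx')]
      have := hineq x hx'
      linarith
  intro t ht
  have hb := key t ht
  rw [Real.norm_of_nonneg (hFnn t ht), sub_zero,
    gronwallBound_of_K_ne_0 hL.ne'] at hb
  have := hineq t ht
  have hFle : F t ≤ B / L * (Real.exp (L * t) - 1) := by simpa using hb
  have : h t ≤ B + L * (B / L * (Real.exp (L * t) - 1)) := by
    refine this.trans ?_
    have := mul_le_mul_of_nonneg_left hFle hL.le
    linarith
  calc h t ≤ B + L * (B / L * (Real.exp (L * t) - 1)) := this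
    _ = B * Real.exp (L * t) := by field_simp; ring

/-- A Gronwall-type estimate on the long time interval `[0, T/ε]`:
an integral inequality with exponentially decaying forcing `K e^{-κ s} M` plus a small
constant `C ε` yields a bound of order `ε`, uniformly on `[0, T/ε]`. -/
theorem stmt_1 (C K κ M T ε : ℝ)
    (hC : 0 < C) (hK : 0 < K) (hκ : 0 < κ) (hM : 0 < M) (hT : 0 < T) (hε : 0 < ε)
    (h : ℝ → ℝ)
    (hcont : ContinuousOn h (Set.Icc 0 (T / ε)))
    (hnonneg : ∀ t ∈ Set.Icc (0 : ℝ) (T / ε), 0 ≤ h t)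
    (hineq : ∀ t ∈ Set.Icc (0 : ℝ) (T / ε),
      h t ≤ C * ε * ∫ s in (0 : ℝ)..t, (h s + K * Real.exp (-κ * s) * M + C * ε)) :
    ∀ t ∈ Set.Icc (0 : ℝ) (T / ε),
      h t ≤ C * (K * M / κ + C * T) * Real.exp (C * T) * ε := by
  set a := T / ε with ha_def
  have ha : 0 < a := div_pos hT hε
  set B := C * ε * (K * M / κ + C * T) with hB_def
  have hKMκ : 0 < K * M / κ + C * T := by positivity
  have hB : 0 ≤ B := by positivity
  have hL : 0 < C * ε := by positivity
  have hexp_int : ∀ t : ℝ, (∫ s in (0:ℝ)..t, Real.exp (-κ * s)) = (1 - Real.exp (-κ * t)) / κ := by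
    intro t
    have hF : ∀ s : ℝ, HasDerivAt (fun u => -(1/κ) * Real.exp (-κ * u)) (Real.exp (-κ * s)) s := by
      intro s
      have h1 : HasDerivAt (fun u : ℝ => -κ * u) (-κ) s := by
        simpa using (hasDerivAt_id s).const_mul (-κ)
      have h2 := h1.exp
      have := h2.const_mul (-(1/κ))
      convert this using 1
      · rfl
      · rfl
      field_simp
    rw [intervalIntegral.integral_eq_sub_of_hasDerivAt (fun s _ => hF s)
      ((Real.continuous_exp.comp (continuous_const.mul continuous_id)).continuousOn.intervalIntegrable)]
    field_simp
    simp only [mul_zero, neg_zero, Real.exp_zero]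
    ring
  have hineq' : ∀ t ∈ Set.Icc (0:ℝ) a, h t ≤ B + (C * ε) * ∫ s in (0:ℝ)..t, h s := by
    intro t ht
    have hint_h : IntervalIntegrable h MeasureTheory.volume 0 t := by
      apply ContinuousOn.intervalIntegrable
      apply hcont.mono
      rw [Set.uIcc_of_le ht.1]
      exact Set.Icc_subset_Icc le_rfl ht.2
    have hint_g : IntervalIntegrable (fun s => K * Real.exp (-κ * s) * M + C * ε)
        MeasureTheory.volume 0 t := by
      apply Continuous.intervalIntegrable
      fun_prop
    have hsplit : (∫ s in (0:ℝ)..t, (h s + K * Real.exp (-κ * s) * M + C * ε))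
        = (∫ s in (0:ℝ)..t, h s) + ∫ s in (0:ℝ)..t, (K * Real.exp (-κ * s) * M + C * ε) := by
      rw [← intervalIntegral.integral_add hint_h hint_g]
      congr 1; ext s; ring
    have hg_val : (∫ s in (0:ℝ)..t, (K * Real.exp (-κ * s) * M + C * ε))
        = K * M * ((1 - Real.exp (-κ * t)) / κ) + C * ε * t := by
      rw [intervalIntegral.integral_add ((by fun_prop : Continuous fun s =>
          K * Real.exp (-κ * s) * M).intervalIntegrable _ _)
        (continuous_const.intervalIntegrable _ _)]
      rw [intervalIntegral.integral_const, smul_eq_mul]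
      congr 1
      · have heq : (∫ s in (0:ℝ)..t, K * Real.exp (-κ * s) * M)
            = K * M * ∫ s in (0:ℝ)..t, Real.exp (-κ * s) := by
          rw [← intervalIntegral.integral_const_mul]
          congr 1; ext s; ring
        rw [heq, hexp_int]
      · ring
    have hεt : ε * t ≤ T := by
      rw [mul_comm]
      calc t * ε ≤ (T / ε) * ε := mul_le_mul_of_nonneg_right ht.2 hε.le
        _ = T := by field_simp
    have hg_bound : (∫ s in (0:ℝ)..t, (K * Real.exp (-κ * s) * M + C * ε))
        ≤ K * M / κ + C * T := by
      rw [hg_val]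
      have hexp_pos : 0 < Real.exp (-κ * t) := Real.exp_pos _
      have h1 : K * M * ((1 - Real.exp (-κ * t)) / κ) ≤ K * M / κ := by
        have hKM : 0 < K * M := by positivity
        have hfrac : (1 - Real.exp (-κ * t)) / κ ≤ 1 / κ := by
          rw [div_le_div_iff₀ hκ hκ]
          nlinarith
        calc K * M * ((1 - Real.exp (-κ * t)) / κ) ≤ K * M * (1 / κ) :=
              mul_le_mul_of_nonneg_left hfrac hKM.le
          _ = K * M / κ := by ring
      have h2 : C * ε * t ≤ C * T := by
        calc C * ε * t = C * (ε * t) := by ring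
          _ ≤ C * T := mul_le_mul_of_nonneg_left hεt hC.le
      linarith
    calc h t ≤ C * ε * ∫ s in (0:ℝ)..t, (h s + K * Real.exp (-κ * s) * M + C * ε) :=
          hineq t ht
      _ = C * ε * ((∫ s in (0:ℝ)..t, h s)
            + ∫ s in (0:ℝ)..t, (K * Real.exp (-κ * s) * M + C * ε)) := by rw [hsplit]
      _ ≤ C * ε * ((∫ s in (0:ℝ)..t, h s) + (K * M / κ + C * T)) := by
          apply mul_le_mul_of_nonneg_left _ hL.le
          linarith
      _ = B + (C * ε) * ∫ s in (0:ℝ)..t, h s := by rw [hB_def]; ring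
  have key := gronwall_int hL hB hcont hnonneg hineq'
  intro t ht
  have h1 := key t ht
  have h2 : Real.exp (C * ε * t) ≤ Real.exp (C * T) := by
    apply Real.exp_le_exp.2
    have hεt : ε * t ≤ T := by
      rw [mul_comm]
      calc t * ε ≤ (T / ε) * ε := mul_le_mul_of_nonneg_right ht.2 hε.le
        _ = T := by field_simp
    calc C * ε * t = C * (ε * t) := by ring
      _ ≤ C * T := mul_le_mul_of_nonneg_left hεt hC.le
  calc h t ≤ B * Real.exp (C * ε * t) := h1
    _ ≤ B * Real.exp (C * T) := mul_le_mul_of_nonneg_left h2 hB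
    _ = C * (K * M / κ + C * T) * Real.exp (C * T) * ε := by rw [hB_def]; ring
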